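/- Let a, λ ∈ ℝ with λ > 0, and define p(r) = −λr⁴ − (1 + 3λa²)r² − 2r + λ²a⁶ and χ = 1 + a²λ, Δ(r) = (1 − λr²)(r² + a²) − 2r. Then: (a) p is strictly decreasing on [0, ∞); (b) if moreover 0 < a²λ < 1 and r₋ > 0 satisfies Δ(r₋) = 0, then p(r₋) = χ(χ − 2)a² − 2χ r₋², and this quantity is strictly negative. -/
import Mathlib


/-- The polynomial `p(r) = −λr⁴ − (1 + 3λa²)r² − 2r + λ²a⁶` bounding the gradient of the
time function in the proof of global hyperbolicity: it is strictly decreasing on `[0, ∞)`,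
and at the inner horizon radius `r₋` it equals `χ(χ−2)a² − 2χr₋² < 0`. -/
theorem time_function_polynomial_negative
    (a lam : ℝ) (hlam : 0 < lam)
    (p : ℝ → ℝ)
    (hp : ∀ r, p r = -lam * r ^ 4 - (1 + 3 * lam * a ^ 2) * r ^ 2 - 2 * r + lam ^ 2 * a ^ 6)
    (χ : ℝ) (hχ : χ = 1 + a ^ 2 * lam)
    (Δ : ℝ → ℝ) (hΔ : ∀ r, Δ r = (1 - lam * r ^ 2) * (r ^ 2 + a ^ 2) - 2 * r) :
    StrictAntiOn p (Set.Ici 0) ∧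
    (∀ rm : ℝ, 0 < a ^ 2 * lam → a ^ 2 * lam < 1 → 0 < rm → Δ rm = 0 →
      p rm = χ * (χ - 2) * a ^ 2 - 2 * χ * rm ^ 2 ∧
      χ * (χ - 2) * a ^ 2 - 2 * χ * rm ^ 2 < 0) := by
  constructor
  · intro x hx y hy hxy
    rw [hp x, hp y]
    have hx0 : (0:ℝ) ≤ x := hx
    have h2 : x ^ 2 < y ^ 2 := by nlinarith
    have h4 : x ^ 4 < y ^ 4 := by nlinarith
    nlinarith [mul_pos hlam (by linarith : (0:ℝ) < y ^ 4 - x ^ 4), mul_pos hlam (by linarith : (0:ℝ) < y ^ 2 - x ^ 2), mul_nonneg (mul_nonneg hlam.le (sq_nonneg a)) (by linarith : (0:ℝ) ≤ y ^ 2 - x ^ 2)]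
  · intro rm hpos hlt hrm hΔ0
    have hΔr := hΔ rm
    rw [hΔr] at hΔ0
    have ha : 0 < a ^ 2 := by nlinarith
    constructor
    · rw [hp rm, hχ]; nlinarith [hΔ0]
    · have hχpos : 0 < χ := by rw [hχ]; nlinarith
      have hχ2 : χ - 2 < 0 := by rw [hχ]; nlinarith
      have h1 : χ * (χ - 2) * a ^ 2 < 0 :=
        mul_neg_of_neg_of_pos (mul_neg_of_pos_of_neg hχpos hχ2) ha
      nlinarith [mul_pos hχpos (mul_pos hrm hrm)]
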